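/- The class of linearly ordered sets equipped with one strict order preserving unary operation has the amalgamation property: whenever A, B, C are linearly ordered sets with strictly monotone unary operations f_A, f_B, f_C and i_A : C → A, i_B : C → B are order embeddings satisfying i_A ∘ f_C = f_A ∘ i_A and i_B ∘ f_C = f_B ∘ i_B, there exist a linearly ordered set D with a strictly monotone unary operation f_D and order embeddings j_A : A → D, j_B : B → D commuting with the operations, such that j_A ∘ i_A = j_B ∘ i_B. -/

import Mathlib

/-- A linearly ordered set equipped with one strict order preserving (strictly
monotone) unary operation. -/
structure LinOrderStrictMono where
  carrier : Type
  [linOrd : LinearOrder carrier]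
  f : carrier → carrier
  smono : StrictMono f

attribute [instance] LinOrderStrictMono.linOrd

namespace AmalgAux

/-- An extension of `C`: a structure `X` with an order embedding of `C`
commuting with the operations. -/
structure Ext (C : LinOrderStrictMono) where
  X : LinOrderStrictMono
  i : C.carrier ↪o X.carrier
  comm : ∀ c, i (C.f c) = X.f (i c)

variable {C : LinOrderStrictMono}

namespace Ext

/-- `n`-th iterate of the operation. -/
def it (E : Ext C) (n : ℕ) (x : E.X.carrier) : E.X.carrier := E.X.f^[n] x

/-- The cut of `x` in `C`. -/
def cut (E : Ext C) (x : E.X.carrier) : Set C.carrier := {c | E.i c ≤ x}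

/-- `x` is in the image of `C`. -/
def hit (E : Ext C) (x : E.X.carrier) : Prop := x ∈ Set.range E.i

lemma it_zero (E : Ext C) (x : E.X.carrier) : E.it 0 x = x := rfl

lemma it_succ (E : Ext C) (n : ℕ) (x : E.X.carrier) :
    E.it (n+1) x = E.it n (E.X.f x) := Function.iterate_succ_apply _ _ _

lemma it_succ' (E : Ext C) (n : ℕ) (x : E.X.carrier) :
    E.it (n+1) x = E.X.f (E.it n x) := Function.iterate_succ_apply' _ _ _

lemma it_mono (E : Ext C) (n : ℕ) : Monotone (E.it n) :=
  E.X.smono.monotone.iterate n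

lemma it_inj (E : Ext C) (n : ℕ) : Function.Injective (E.it n) :=
  E.X.smono.injective.iterate n

lemma comm_it (E : Ext C) (n : ℕ) (c : C.carrier) :
    E.it n (E.i c) = E.i (C.f^[n] c) := by
  induction n with
  | zero => rfl
  | succ n ih =>
    rw [E.it_succ', ih, ← E.comm]
    exact congrArg E.i (Function.iterate_succ_apply' C.f n c).symm

lemma mem_cut {E : Ext C} {x : E.X.carrier} {c : C.carrier} :
    c ∈ E.cut x ↔ E.i c ≤ x := Iff.rfl

lemma cut_mono {E : Ext C} {x y : E.X.carrier} (h : x ≤ y) :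
    E.cut x ⊆ E.cut y := fun _ hc => le_trans hc h

lemma cut_i (E : Ext C) (c : C.carrier) : E.cut (E.i c) = Set.Iic c :=
  Set.ext fun _ => E.i.le_iff_le

lemma hit_i (E : Ext C) (c : C.carrier) : E.hit (E.i c) := ⟨c, rfl⟩

end Ext

open Ext

/-- Pointwise (one-level) strict comparison across two extensions. -/
def pLt (E F : Ext C) (x : E.X.carrier) (y : F.X.carrier) : Prop :=
  E.cut x ⊂ F.cut y ∨ (E.cut x = F.cut y ∧ E.hit x ∧ ¬ F.hit y)

/-- Pointwise (one-level) equality across two extensions. -/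
def pEq (E F : Ext C) (x : E.X.carrier) (y : F.X.carrier) : Prop :=
  E.cut x = F.cut y ∧ (E.hit x ↔ F.hit y)

lemma pEq_refl (E : Ext C) (x : E.X.carrier) : pEq E E x x := ⟨rfl, Iff.rfl⟩

lemma pEq_symm {E F : Ext C} {x y} (h : pEq E F x y) : pEq F E y x :=
  ⟨h.1.symm, h.2.symm⟩

lemma pEq_trans {E F G : Ext C} {x y z} (h1 : pEq E F x y) (h2 : pEq F G y z) :
    pEq E G x z := ⟨h1.1.trans h2.1, h1.2.trans h2.2⟩

lemma pLt_of_pLt_of_pEq {E F G : Ext C} {x y z}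
    (h1 : pLt E F x y) (h2 : pEq F G y z) : pLt E G x z := by
  rcases h1 with h | ⟨he, hx, hy⟩
  · exact Or.inl (h2.1 ▸ h)
  · exact Or.inr ⟨he.trans h2.1, hx, fun hz => hy (h2.2.mpr hz)⟩

lemma pLt_of_pEq_of_pLt {E F G : Ext C} {x y z}
    (h1 : pEq E F x y) (h2 : pLt F G y z) : pLt E G x z := by
  rcases h2 with h | ⟨he, hy, hz⟩
  · exact Or.inl (h1.1 ▸ h)
  · exact Or.inr ⟨h1.1.trans he, h1.2.mpr hy, hz⟩

lemma pLt_trans {E F G : Ext C} {x y z}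
    (h1 : pLt E F x y) (h2 : pLt F G y z) : pLt E G x z := by
  rcases h1 with h | ⟨he, hx, hy⟩
  · rcases h2 with h' | ⟨he', _, _⟩
    · exact Or.inl (h.trans h')
    · exact Or.inl (he' ▸ h)
  · rcases h2 with h' | ⟨_, hy', _⟩
    · exact Or.inl (he ▸ h')
    · exact absurd hy' hy

lemma pLt_pEq_false {E F : Ext C} {x y} (h1 : pLt E F x y) (h2 : pEq E F x y) :
    False := by
  rcases h1 with h | ⟨_, hx, hy⟩
  · exact h.ne h2.1
  · exact hy (h2.2.mp hx)

lemma pLt_irrefl {E : Ext C} {x : E.X.carrier} (h : pLt E E x x) : False :=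
  pLt_pEq_false h (pEq_refl E x)

lemma pLt_asymm {E F : Ext C} {x y} (h1 : pLt E F x y) (h2 : pLt F E y x) :
    False := pLt_irrefl (pLt_trans h1 h2)

lemma cut_total (E F : Ext C) (x : E.X.carrier) (y : F.X.carrier) :
    E.cut x ⊆ F.cut y ∨ F.cut y ⊆ E.cut x := by
  by_cases h : E.cut x ⊆ F.cut y
  · exact Or.inl h
  · right
    obtain ⟨c, hcx, hcy⟩ := Set.not_subset.mp h
    intro c' hc'
    have h1 : y < F.i c := not_le.mp hcy
    have h2 : c' < c := F.i.lt_iff_lt.mp (lt_of_le_of_lt hc' h1)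
    exact le_trans (E.i.le_iff_le.mpr h2.le) hcx

lemma p_total (E F : Ext C) (x : E.X.carrier) (y : F.X.carrier) :
    pLt E F x y ∨ pEq E F x y ∨ pLt F E y x := by
  by_cases he : E.cut x = F.cut y
  · by_cases hx : E.hit x <;> by_cases hy : F.hit y
    · exact Or.inr (Or.inl ⟨he, by simp [hx, hy]⟩)
    · exact Or.inl (Or.inr ⟨he, hx, hy⟩)
    · exact Or.inr (Or.inr (Or.inr ⟨he.symm, hy, hx⟩))
    · exact Or.inr (Or.inl ⟨he, by simp [hx, hy]⟩)
  · rcases cut_total E F x y with h | h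
    · exact Or.inl (Or.inl ⟨h, fun h' => he (subset_antisymm h h')⟩)
    · exact Or.inr (Or.inr (Or.inl ⟨h, fun h' => he (subset_antisymm h' h)⟩))

/-- The key one-step lemma: one-level strict comparison is preserved by the
operations. -/
lemma stepLt {E F : Ext C} {x : E.X.carrier} {y : F.X.carrier}
    (h : pLt E F x y) : pLt E F (E.X.f x) (F.X.f y) := by
  rcases h with h | ⟨he, hx, hy⟩
  · -- proper cut inclusion
    obtain ⟨c, hcy, hcx⟩ := Set.exists_of_ssubset h
    have hxc : x < E.i c := not_le.mp hcx
    have hfx : E.X.f x < E.i (C.f c) := by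
      rw [E.comm]; exact E.X.smono hxc
    have hfy : F.i (C.f c) ≤ F.X.f y := by
      rw [F.comm]; exact F.X.smono.monotone hcy
    left
    constructor
    · intro c'' hc''
      have h1 : E.i c'' < E.i (C.f c) := lt_of_le_of_lt hc'' hfx
      have h2 : c'' < C.f c := E.i.lt_iff_lt.mp h1
      exact le_trans (F.i.le_iff_le.mpr h2.le) hfy
    · intro hsub
      have : F.i (C.f c) ≤ F.X.f y := hfy
      have : E.i (C.f c) ≤ E.X.f x := hsub this
      exact absurd this (not_le.mpr hfx)
  · -- equal cuts, x in the image of C, y not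
    obtain ⟨c, hc⟩ := hx
    have hcy : F.i c ≤ y := by
      have h0 : c ∈ E.cut x := by rw [mem_cut, hc]
      exact (he ▸ h0 : c ∈ F.cut y)
    have hylt : F.i c < y := lt_of_le_of_ne hcy (fun h' => hy ⟨c, h'⟩)
    have hfx : E.X.f x = E.i (C.f c) := by rw [← hc, ← E.comm]
    have hsub : E.cut (E.X.f x) ⊆ F.cut (F.X.f y) := by
      intro c'' hc''
      have h1 : E.i c'' ≤ E.i (C.f c) := hfx ▸ hc''
      have h2 : c'' ≤ C.f c := E.i.le_iff_le.mp h1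
      have h3 : F.i c'' ≤ F.i (C.f c) := F.i.le_iff_le.mpr h2
      have h4 : F.i (C.f c) < F.X.f y := by
        rw [F.comm]; exact F.X.smono hylt
      exact le_of_lt (lt_of_le_of_lt h3 h4)
    by_cases heq : E.cut (E.X.f x) = F.cut (F.X.f y)
    · right
      refine ⟨heq, ⟨C.f c, hfx.symm⟩, ?_⟩
      rintro ⟨c₂, hc₂⟩
      have h1 : c₂ ∈ F.cut (F.X.f y) := le_of_eq hc₂
      have h2 : c₂ ∈ E.cut (E.X.f x) := heq ▸ h1
      have h3 : E.i c₂ ≤ E.i (C.f c) := hfx ▸ h2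
      have h4 : c₂ ≤ C.f c := E.i.le_iff_le.mp h3
      have h5 : F.i c₂ ≤ F.i (C.f c) := F.i.le_iff_le.mpr h4
      have h6 : F.i (C.f c) < F.X.f y := by
        rw [F.comm]; exact F.X.smono hylt
      rw [hc₂] at h5
      exact absurd h5 (not_le.mpr h6)
    · exact Or.inl ⟨hsub, fun h' => heq (subset_antisymm hsub h')⟩

/-- Lexicographic equality of iterated keys. -/
def kEq (E F : Ext C) (x : E.X.carrier) (y : F.X.carrier) : Prop :=
  ∀ n, pEq E F (E.it n x) (F.it n y)

/-- Lexicographic strict comparison of iterated keys. -/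
def kLt (E F : Ext C) (x : E.X.carrier) (y : F.X.carrier) : Prop :=
  ∃ n, (∀ m < n, pEq E F (E.it m x) (F.it m y)) ∧ pLt E F (E.it n x) (F.it n y)

/-- Some iterate lies in the image of `C`. -/
def Hit (E : Ext C) (x : E.X.carrier) : Prop := ∃ n, E.hit (E.it n x)

lemma kEq_refl (E : Ext C) (x : E.X.carrier) : kEq E E x x :=
  fun n => pEq_refl E (E.it n x)

lemma kEq_symm {E F : Ext C} {x y} (h : kEq E F x y) : kEq F E y x :=
  fun n => pEq_symm (h n)

lemma kEq_trans {E F G : Ext C} {x y z} (h1 : kEq E F x y) (h2 : kEq F G y z) :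
    kEq E G x z := fun n => pEq_trans (h1 n) (h2 n)

lemma kLt_of_kLt_of_kEq {E F G : Ext C} {x y z}
    (h1 : kLt E F x y) (h2 : kEq F G y z) : kLt E G x z := by
  obtain ⟨n, hpre, hd⟩ := h1
  exact ⟨n, fun m hm => pEq_trans (hpre m hm) (h2 m), pLt_of_pLt_of_pEq hd (h2 n)⟩

lemma kLt_of_kEq_of_kLt {E F G : Ext C} {x y z}
    (h1 : kEq E F x y) (h2 : kLt F G y z) : kLt E G x z := by
  obtain ⟨n, hpre, hd⟩ := h2
  exact ⟨n, fun m hm => pEq_trans (h1 m) (hpre m hm), pLt_of_pEq_of_pLt (h1 n) hd⟩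

lemma kLt_trans {E F G : Ext C} {x y z}
    (h1 : kLt E F x y) (h2 : kLt F G y z) : kLt E G x z := by
  obtain ⟨n1, hpre1, hd1⟩ := h1
  obtain ⟨n2, hpre2, hd2⟩ := h2
  rcases lt_trichotomy n1 n2 with h | h | h
  · exact ⟨n1, fun m hm => pEq_trans (hpre1 m hm) (hpre2 m (hm.trans h)),
      pLt_of_pLt_of_pEq hd1 (hpre2 n1 h)⟩
  · subst h
    exact ⟨n1, fun m hm => pEq_trans (hpre1 m hm) (hpre2 m hm),
      pLt_trans hd1 hd2⟩
  · exact ⟨n2, fun m hm => pEq_trans (hpre1 m (hm.trans h)) (hpre2 m hm),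
      pLt_of_pEq_of_pLt (hpre1 n2 h) hd2⟩

lemma kLt_kEq_false {E F : Ext C} {x y} (h1 : kLt E F x y) (h2 : kEq E F x y) :
    False := by
  obtain ⟨n, _, hd⟩ := h1
  exact pLt_pEq_false hd (h2 n)

lemma kLt_irrefl {E : Ext C} {x : E.X.carrier} (h : kLt E E x x) : False :=
  kLt_kEq_false h (kEq_refl E x)

lemma kLt_asymm {E F : Ext C} {x y} (h1 : kLt E F x y) (h2 : kLt F E y x) :
    False := kLt_irrefl (kLt_trans h1 h2)

lemma k_total (E F : Ext C) (x : E.X.carrier) (y : F.X.carrier) :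
    kLt E F x y ∨ kEq E F x y ∨ kLt F E y x := by
  classical
  by_cases h : kEq E F x y
  · exact Or.inr (Or.inl h)
  · have hex : ∃ n, ¬ pEq E F (E.it n x) (F.it n y) := not_forall.mp h
    have hn := Nat.find_spec hex
    have hmin : ∀ m < Nat.find hex, pEq E F (E.it m x) (F.it m y) :=
      fun m hm => not_not.mp (Nat.find_min hex hm)
    rcases p_total E F (E.it (Nat.find hex) x) (F.it (Nat.find hex) y)
      with h1 | h2 | h3
    · exact Or.inl ⟨Nat.find hex, hmin, h1⟩
    · exact absurd h2 hn
    · exact Or.inr (Or.inr ⟨Nat.find hex,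
        fun m hm => pEq_symm (hmin m hm), h3⟩)

lemma kLe_of_le {E : Ext C} {x y : E.X.carrier} (h : x ≤ y) :
    kLt E E x y ∨ kEq E E x y := by
  classical
  by_cases hk : kEq E E x y
  · exact Or.inr hk
  left
  have hex : ∃ n, ¬ pEq E E (E.it n x) (E.it n y) := not_forall.mp hk
  have hn := Nat.find_spec hex
  have hmin : ∀ m < Nat.find hex, pEq E E (E.it m x) (E.it m y) :=
    fun m hm => not_not.mp (Nat.find_min hex hm)
  set n := Nat.find hex with hndef
  have hle : E.it n x ≤ E.it n y := E.it_mono n h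
  have hsub : E.cut (E.it n x) ⊆ E.cut (E.it n y) := cut_mono hle
  by_cases hce : E.cut (E.it n x) = E.cut (E.it n y)
  · refine ⟨n, hmin, Or.inr ⟨hce, ?_, ?_⟩⟩
    · -- show hit at n for x
      by_cases hy : E.hit (E.it n y)
      · obtain ⟨c, hc⟩ := hy
        have h1 : c ∈ E.cut (E.it n y) := by rw [mem_cut, hc]
        have h2 : c ∈ E.cut (E.it n x) := hce ▸ h1
        have h3 : E.it n x = E.i c := le_antisymm (hc ▸ hle) h2
        exact absurd ⟨hce, by rw [h3, ← hc]⟩ hn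
      · by_cases hx : E.hit (E.it n x)
        · exact hx
        · exact absurd ⟨hce, iff_of_false hx hy⟩ hn
    · intro hy
      obtain ⟨c, hc⟩ := hy
      have h1 : c ∈ E.cut (E.it n y) := by rw [mem_cut, hc]
      have h2 : c ∈ E.cut (E.it n x) := hce ▸ h1
      have h3 : E.it n x = E.i c := le_antisymm (hc ▸ hle) h2
      exact hn ⟨hce, by rw [h3, ← hc]⟩
  · exact ⟨n, hmin, Or.inl ⟨hsub, fun h' => hce (subset_antisymm hsub h')⟩⟩

lemma lt_of_kLt {E : Ext C} {x y : E.X.carrier} (h : kLt E E x y) : x < y := by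
  rcases lt_trichotomy x y with h1 | h1 | h1
  · exact h1
  · subst h1; exact absurd h kLt_irrefl
  · rcases kLe_of_le h1.le with h2 | h2
    · exact absurd (kLt_trans h h2) kLt_irrefl
    · exact absurd (kLt_of_kLt_of_kEq h h2) kLt_irrefl

lemma kEq_rigid {E : Ext C} {x y : E.X.carrier} (h : kEq E E x y)
    (hx : Hit E x) : x = y := by
  obtain ⟨n, c, hc⟩ := hx
  have h1 := (h n).2.mp ⟨c, hc⟩
  obtain ⟨c', hc'⟩ := h1
  have h2 : E.cut (E.i c) = E.cut (E.i c') := by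
    rw [hc, hc']; exact (h n).1
  rw [E.cut_i, E.cut_i] at h2
  have h3 : c = c' := by
    have hz := Set.ext_iff.mp h2
    exact le_antisymm ((hz c).mp le_rfl) ((hz c').mpr le_rfl)
  have h4 : E.it n x = E.it n y := by rw [← hc, ← hc', h3]
  exact E.it_inj n h4

lemma kLt_shift {E F : Ext C} {x : E.X.carrier} {y : F.X.carrier}
    (h : kLt E F x y) : kLt E F (E.X.f x) (F.X.f y) := by
  obtain ⟨n, hpre, hd⟩ := h
  cases n with
  | zero => exact ⟨0, fun m hm => absurd hm (Nat.not_lt_zero m), stepLt hd⟩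
  | succ n =>
    refine ⟨n, fun m hm => ?_, ?_⟩
    · have h1 := hpre (m+1) (Nat.succ_lt_succ hm)
      rwa [E.it_succ, F.it_succ] at h1
    · have h1 : pLt E F (E.it (n+1) x) (F.it (n+1) y) := hd
      rwa [E.it_succ, F.it_succ] at h1

lemma kEq_shift {E F : Ext C} {x : E.X.carrier} {y : F.X.carrier}
    (h : kEq E F x y) : kEq E F (E.X.f x) (F.X.f y) := by
  intro n
  have h1 := h (n+1)
  rwa [E.it_succ, F.it_succ] at h1

lemma Hit_shift {E : Ext C} {x : E.X.carrier} (h : Hit E x) :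
    Hit E (E.X.f x) := by
  obtain ⟨n, c, hc⟩ := h
  refine ⟨n, ⟨C.f c, ?_⟩⟩
  rw [← E.it_succ, E.it_succ', ← hc, E.comm]

lemma Hit_unshift {E : Ext C} {x : E.X.carrier} (h : Hit E (E.X.f x)) :
    Hit E x := by
  obtain ⟨n, hn⟩ := h
  exact ⟨n+1, by rwa [E.it_succ]⟩

lemma Hit_of_kEq {E F : Ext C} {x y} (h : kEq E F x y) (hy : Hit F y) :
    Hit E x := by
  obtain ⟨n, hn⟩ := hy
  exact ⟨n, (h n).2.mpr hn⟩

lemma kEq_i (E F : Ext C) (c : C.carrier) : kEq E F (E.i c) (F.i c) := by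
  intro n
  rw [E.comm_it, F.comm_it]
  exact ⟨by rw [E.cut_i, F.cut_i], by simp [E.hit_i, F.hit_i]⟩

section Sum

variable (EA EB : Ext C)

/-- The preorder on the disjoint sum. -/
def sle : EA.X.carrier ⊕ EB.X.carrier → EA.X.carrier ⊕ EB.X.carrier → Prop
  | Sum.inl a, Sum.inl a' => a ≤ a'
  | Sum.inl a, Sum.inr b => kLt EA EB a b ∨ kEq EA EB a b
  | Sum.inr b, Sum.inl a => kLt EB EA b a ∨ (kEq EB EA b a ∧ Hit EA a)
  | Sum.inr b, Sum.inr b' => b ≤ b'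

lemma sle_refl : ∀ x, sle EA EB x x
  | Sum.inl _ => le_refl _
  | Sum.inr _ => le_refl _

lemma sle_trans : ∀ {x y z}, sle EA EB x y → sle EA EB y z → sle EA EB x z
  | Sum.inl _, Sum.inl _, Sum.inl _, h1, h2 => le_trans h1 h2
  | Sum.inl a, Sum.inl a', Sum.inr b, h1, h2 => by
    rcases kLe_of_le h1 with h | h
    · rcases h2 with h2 | h2
      · exact Or.inl (kLt_trans h h2)
      · exact Or.inl (kLt_of_kLt_of_kEq h h2)
    · rcases h2 with h2 | h2
      · exact Or.inl (kLt_of_kEq_of_kLt h h2)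
      · exact Or.inr (kEq_trans h h2)
  | Sum.inl a, Sum.inr b, Sum.inl a', h1, h2 => by
    rcases h2 with h2 | ⟨h2, hhit⟩
    · rcases h1 with h1 | h1
      · exact (lt_of_kLt (kLt_trans h1 h2)).le
      · exact (lt_of_kLt (kLt_of_kEq_of_kLt h1 h2)).le
    · rcases h1 with h1 | h1
      · exact (lt_of_kLt (kLt_of_kLt_of_kEq h1 h2)).le
      · exact le_of_eq (kEq_rigid (kEq_trans h1 h2)
          (Hit_of_kEq (kEq_trans h1 h2) hhit))
  | Sum.inl a, Sum.inr b, Sum.inr b', h1, h2 => by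
    rcases kLe_of_le h2 with h | h
    · rcases h1 with h1 | h1
      · exact Or.inl (kLt_trans h1 h)
      · exact Or.inl (kLt_of_kEq_of_kLt h1 h)
    · rcases h1 with h1 | h1
      · exact Or.inl (kLt_of_kLt_of_kEq h1 h)
      · exact Or.inr (kEq_trans h1 h)
  | Sum.inr b, Sum.inl a, Sum.inl a', h1, h2 => by
    rcases h1 with h1 | ⟨h1, hhit⟩
    · rcases kLe_of_le h2 with h | h
      · exact Or.inl (kLt_trans h1 h)
      · exact Or.inl (kLt_of_kLt_of_kEq h1 h)
    · rcases kLe_of_le h2 with h | h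
      · exact Or.inl (kLt_of_kEq_of_kLt h1 h)
      · have : a = a' := kEq_rigid h hhit
        exact Or.inr ⟨this ▸ h1, this ▸ hhit⟩
  | Sum.inr b, Sum.inl a, Sum.inr b', h1, h2 => by
    rcases h1 with h1 | ⟨h1, hhit⟩
    · rcases h2 with h2 | h2
      · exact (lt_of_kLt (kLt_trans h1 h2)).le
      · exact (lt_of_kLt (kLt_of_kLt_of_kEq h1 h2)).le
    · rcases h2 with h2 | h2
      · exact (lt_of_kLt (kLt_of_kEq_of_kLt h1 h2)).le
      · exact le_of_eq (kEq_rigid (kEq_trans h1 h2)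
          (Hit_of_kEq h1 hhit))
  | Sum.inr b, Sum.inr b', Sum.inl a, h1, h2 => by
    rcases kLe_of_le h1 with h | h
    · rcases h2 with h2 | ⟨h2, hhit⟩
      · exact Or.inl (kLt_trans h h2)
      · exact Or.inl (kLt_of_kLt_of_kEq h h2)
    · rcases h2 with h2 | ⟨h2, hhit⟩
      · exact Or.inl (kLt_of_kEq_of_kLt h h2)
      · exact Or.inr ⟨kEq_trans h h2, hhit⟩
  | Sum.inr _, Sum.inr _, Sum.inr _, h1, h2 => le_trans h1 h2

lemma sle_total : ∀ x y, sle EA EB x y ∨ sle EA EB y x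
  | Sum.inl a, Sum.inl a' => le_total a a'
  | Sum.inr b, Sum.inr b' => le_total b b'
  | Sum.inl a, Sum.inr b => by
    rcases k_total EA EB a b with h | h | h
    · exact Or.inl (Or.inl h)
    · exact Or.inl (Or.inr h)
    · exact Or.inr (Or.inl h)
  | Sum.inr b, Sum.inl a => by
    rcases k_total EB EA b a with h | h | h
    · exact Or.inl (Or.inl h)
    · exact Or.inr (Or.inr (kEq_symm h))
    · exact Or.inr (Or.inl h)

/-- The operation on the sum. -/
def smap : EA.X.carrier ⊕ EB.X.carrier → EA.X.carrier ⊕ EB.X.carrier :=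
  Sum.map EA.X.f EB.X.f

lemma sle_map : ∀ {x y}, sle EA EB x y → sle EA EB (smap EA EB x) (smap EA EB y)
  | Sum.inl _, Sum.inl _, h => EA.X.smono.monotone h
  | Sum.inl _, Sum.inr _, h => h.imp kLt_shift kEq_shift
  | Sum.inr _, Sum.inl _, h =>
      h.imp kLt_shift (fun ⟨h1, h2⟩ => ⟨kEq_shift h1, Hit_shift h2⟩)
  | Sum.inr _, Sum.inr _, h => EB.X.smono.monotone h

lemma seq_reflect : ∀ {x y}, sle EA EB (smap EA EB x) (smap EA EB y) →
    sle EA EB (smap EA EB y) (smap EA EB x) → sle EA EB x y ∧ sle EA EB y x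
  | Sum.inl a, Sum.inl a', h1, h2 => by
    have : a = a' := EA.X.smono.injective (le_antisymm h1 h2)
    subst this
    exact ⟨le_refl _, le_refl _⟩
  | Sum.inr b, Sum.inr b', h1, h2 => by
    have : b = b' := EB.X.smono.injective (le_antisymm h1 h2)
    subst this
    exact ⟨le_refl _, le_refl _⟩
  | Sum.inl a, Sum.inr b, h1, h2 => by
    have key : kEq EA EB (EA.X.f a) (EB.X.f b) ∧ Hit EA (EA.X.f a) := by
      rcases h1 with h1 | h1
      · rcases h2 with h2 | ⟨h2, _⟩
        · exact absurd h2 (fun h' => kLt_asymm h1 h')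
        · exact absurd (kLt_of_kLt_of_kEq h1 h2) kLt_irrefl
      · rcases h2 with h2 | ⟨h2, hh⟩
        · exact absurd (kLt_of_kLt_of_kEq h2 h1) kLt_irrefl
        · exact ⟨h1, hh⟩
    have hkeq : kEq EA EB a b := by
      rcases k_total EA EB a b with h | h | h
      · exact absurd key.1 (fun h' => kLt_kEq_false (kLt_shift h) h')
      · exact h
      · exact absurd (kEq_symm key.1)
          (fun h' => kLt_kEq_false (kLt_shift h) h')
    have hhit : Hit EA a := Hit_unshift key.2
    exact ⟨Or.inr hkeq, Or.inr ⟨kEq_symm hkeq, hhit⟩⟩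
  | Sum.inr b, Sum.inl a, h1, h2 => by
    have key : kEq EA EB (EA.X.f a) (EB.X.f b) ∧ Hit EA (EA.X.f a) := by
      rcases h2 with h2 | h2
      · rcases h1 with h1 | ⟨h1, _⟩
        · exact absurd h1 (fun h' => kLt_asymm h2 h')
        · exact absurd (kLt_of_kLt_of_kEq h2 h1) kLt_irrefl
      · rcases h1 with h1 | ⟨h1, hh⟩
        · exact absurd (kLt_of_kLt_of_kEq h1 h2) kLt_irrefl
        · exact ⟨kEq_symm h1, hh⟩
    have hkeq : kEq EA EB a b := by
      rcases k_total EA EB a b with h | h | h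
      · exact absurd key.1 (fun h' => kLt_kEq_false (kLt_shift h) h')
      · exact h
      · exact absurd (kEq_symm key.1)
          (fun h' => kLt_kEq_false (kLt_shift h) h')
    have hhit : Hit EA a := Hit_unshift key.2
    exact ⟨Or.inr ⟨kEq_symm hkeq, hhit⟩, Or.inr hkeq⟩

/-- The setoid identifying mutually `sle`-related elements. -/
def dSetoid : Setoid (EA.X.carrier ⊕ EB.X.carrier) where
  r x y := sle EA EB x y ∧ sle EA EB y x
  iseqv := ⟨fun x => ⟨sle_refl EA EB x, sle_refl EA EB x⟩,
    fun h => ⟨h.2, h.1⟩,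
    fun h1 h2 => ⟨sle_trans EA EB h1.1 h2.1, sle_trans EA EB h2.2 h1.2⟩⟩

/-- The amalgam carrier. -/
def DD : Type := Quotient (dSetoid EA EB)

noncomputable instance : LinearOrder (DD EA EB) where
  le := Quotient.lift₂ (sle EA EB) (by
    intro x y x' y' hx hy
    apply propext
    constructor
    · intro h
      exact sle_trans EA EB (sle_trans EA EB hx.2 h) hy.1
    · intro h
      exact sle_trans EA EB (sle_trans EA EB hx.1 h) hy.2)
  le_refl := fun x => Quotient.inductionOn x (fun a => sle_refl EA EB a)
  le_trans := fun x y z => Quotient.inductionOn₃ x y z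
    (fun a b c h1 h2 => sle_trans EA EB h1 h2)
  le_antisymm := fun x y => Quotient.inductionOn₂ x y
    (fun a b h1 h2 => Quotient.sound ⟨h1, h2⟩)
  le_total := fun x y => Quotient.inductionOn₂ x y
    (fun a b => sle_total EA EB a b)
  toDecidableLE := fun _ _ => Classical.dec _

/-- The operation on the amalgam. -/
def dmap : DD EA EB → DD EA EB :=
  Quotient.map (smap EA EB) (fun x y h =>
    ⟨sle_map EA EB h.1, sle_map EA EB h.2⟩)

lemma dmap_smono : StrictMono (dmap EA EB) := by
  intro x y h
  induction x using Quotient.inductionOn with | h a =>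
  induction y using Quotient.inductionOn with | h b =>
  replace h := (lt_iff_le_not_ge (α := DD EA EB)).mp h
  refine (lt_iff_le_not_ge (α := DD EA EB)).mpr ?_
  refine ⟨sle_map EA EB h.1, fun hcon => ?_⟩
  have h2 : sle EA EB (smap EA EB a) (smap EA EB b) := sle_map EA EB h.1
  have := seq_reflect EA EB h2 hcon
  exact h.2 (this.2)

/-- The amalgam as a structure. -/
noncomputable def Dstruct : LinOrderStrictMono where
  carrier := DD EA EB
  f := dmap EA EB
  smono := dmap_smono EA EB

/-- Embedding of the first factor. -/
noncomputable def jjA : EA.X.carrier ↪o (Dstruct EA EB).carrier :=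
  OrderEmbedding.ofMapLEIff
    (fun a => (Quotient.mk (dSetoid EA EB) (Sum.inl a) : DD EA EB))
    (fun a a' => Iff.rfl)

/-- Embedding of the second factor. -/
noncomputable def jjB : EB.X.carrier ↪o (Dstruct EA EB).carrier :=
  OrderEmbedding.ofMapLEIff
    (fun b => (Quotient.mk (dSetoid EA EB) (Sum.inr b) : DD EA EB))
    (fun b b' => Iff.rfl)

lemma jjA_comm (a : EA.X.carrier) :
    jjA EA EB (EA.X.f a) = (Dstruct EA EB).f (jjA EA EB a) := rfl

lemma jjB_comm (b : EB.X.carrier) :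
    jjB EA EB (EB.X.f b) = (Dstruct EA EB).f (jjB EA EB b) := rfl

lemma jj_agree (c : C.carrier) : jjA EA EB (EA.i c) = jjB EA EB (EB.i c) := by
  apply Quotient.sound
  refine ⟨Or.inr (kEq_i EA EB c), Or.inr ⟨kEq_i EB EA c, ⟨0, EA.hit_i c⟩⟩⟩

end Sum

end AmalgAux

/-- The class of linearly ordered sets with one strict order preserving unary
operation has the amalgamation property. -/
theorem linear_orders_one_strict_monotone_op_amalgamation
    (A B C : LinOrderStrictMono)
    (iA : C.carrier ↪o A.carrier) (iB : C.carrier ↪o B.carrier)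
    (hA : ∀ c, iA (C.f c) = A.f (iA c))
    (hB : ∀ c, iB (C.f c) = B.f (iB c)) :
    ∃ (D : LinOrderStrictMono) (jA : A.carrier ↪o D.carrier)
      (jB : B.carrier ↪o D.carrier),
      (∀ a, jA (A.f a) = D.f (jA a)) ∧
      (∀ b, jB (B.f b) = D.f (jB b)) ∧
      (∀ c, jA (iA c) = jB (iB c)) := by
  let EA : AmalgAux.Ext C := ⟨A, iA, hA⟩
  let EB : AmalgAux.Ext C := ⟨B, iB, hB⟩
  exact ⟨AmalgAux.Dstruct EA EB, AmalgAux.jjA EA EB, AmalgAux.jjB EA EB,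
    AmalgAux.jjA_comm EA EB, AmalgAux.jjB_comm EA EB, AmalgAux.jj_agree EA EB⟩
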